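/- Let $T$ be an increasing ordered tree with $k$ edges. Then for all $n\ge k+1$, ${\rm ex}_\rightarrow(n,T) = (k-1)n - \binom{k}{2}$. -/

import Mathlib

/-- Vertex set of an ordered-graph pattern given by its edge set. -/
def verts (E : Finset (ℕ × ℕ)) : Finset ℕ := E.image Prod.fst ∪ E.image Prod.snd

/-- An increasing (ordered) tree with its current longest edge (i,j). -/
inductive IncTree : Finset (ℕ × ℕ) → ℕ → ℕ → Prop
  | single (i j : ℕ) : i < j → IncTree {(i, j)} i j
  | right (E : Finset (ℕ × ℕ)) (i j j' : ℕ) :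
      IncTree E i j → j < j' → IncTree (insert (i, j') E) i j'
  | left (E : Finset (ℕ × ℕ)) (i j i' : ℕ) :
      IncTree E i j → i' < i → IncTree (insert (i', j) E) i' j

/-- An n-vertex ordered graph G contains the ordered pattern E if there is an
order-preserving injection of the pattern's vertices mapping edges to edges. -/
def OContains {n : ℕ} (G : SimpleGraph (Fin n)) (E : Finset (ℕ × ℕ)) : Prop :=
  ∃ f : ℕ → Fin n, (∀ a ∈ verts E, ∀ b ∈ verts E, a < b → f a < f b) ∧
    ∀ p ∈ E, G.Adj (f p.1) (f p.2)

lemma mem_verts {E : Finset (ℕ × ℕ)} {a : ℕ} :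
    a ∈ verts E ↔ (∃ b, (a, b) ∈ E) ∨ (∃ b, (b, a) ∈ E) := by
  simp only [verts, Finset.mem_union, Finset.mem_image, Prod.exists]
  constructor
  · rintro (⟨x, y, hxy, rfl⟩ | ⟨x, y, hxy, rfl⟩)
    · exact Or.inl ⟨y, hxy⟩
    · exact Or.inr ⟨x, hxy⟩
  · rintro (⟨b, hb⟩ | ⟨b, hb⟩)
    · exact Or.inl ⟨a, b, hb, rfl⟩
    · exact Or.inr ⟨b, a, hb, rfl⟩

lemma fst_mem_verts {E : Finset (ℕ × ℕ)} {p : ℕ × ℕ} (h : p ∈ E) : p.1 ∈ verts E :=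
  mem_verts.2 (Or.inl ⟨p.2, h⟩)

lemma snd_mem_verts {E : Finset (ℕ × ℕ)} {p : ℕ × ℕ} (h : p ∈ E) : p.2 ∈ verts E :=
  mem_verts.2 (Or.inr ⟨p.1, h⟩)

lemma verts_insert (x y : ℕ) (E : Finset (ℕ × ℕ)) :
    verts (insert (x, y) E) = insert x (insert y (verts E)) := by
  show _ = insert x (insert y (E.image Prod.fst ∪ E.image Prod.snd))
  rw [verts, Finset.image_insert, Finset.image_insert, Finset.insert_union,
    Finset.union_insert]

lemma IncTree.self_mem {E : Finset (ℕ × ℕ)} {i j : ℕ} (h : IncTree E i j) :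
    (i, j) ∈ E := by
  induction h with
  | single i j hij => simp
  | right E i j j' hT hjj' IH => simp
  | left E i j i' hT hii' IH => simp

lemma IncTree.edge_lt {E : Finset (ℕ × ℕ)} {i j : ℕ} (h : IncTree E i j) :
    ∀ p ∈ E, p.1 < p.2 := by
  induction h with
  | single i j hij => simp [hij]
  | right E i j j' hT hjj' IH =>
      intro p hp
      rcases Finset.mem_insert.1 hp with h | h
      · subst h
        have : i < j := IH (i, j) hT.self_mem
        exact lt_trans this hjj'
      · exact IH p h
  | left E i j i' hT hii' IH =>
      intro p hp
      rcases Finset.mem_insert.1 hp with h | h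
      · subst h
        exact lt_trans hii' (IH (i, j) hT.self_mem)
      · exact IH p h

lemma IncTree.lt {E : Finset (ℕ × ℕ)} {i j : ℕ} (h : IncTree E i j) : i < j :=
  h.edge_lt (i, j) h.self_mem

lemma IncTree.verts_between {E : Finset (ℕ × ℕ)} {i j : ℕ} (h : IncTree E i j) :
    ∀ a ∈ verts E, i ≤ a ∧ a ≤ j := by
  induction h with
  | single i j hij =>
      intro a ha
      rcases mem_verts.1 ha with ⟨b, hb⟩ | ⟨b, hb⟩ <;> simp at hb <;> omega
  | right E i j j' hT hjj' IH =>
      intro a ha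
      rw [verts_insert] at ha
      have hlt := hT.lt
      rcases Finset.mem_insert.1 ha with rfl | ha
      · omega
      rcases Finset.mem_insert.1 ha with rfl | ha
      · omega
      · have := IH a ha; omega
  | left E i j i' hT hii' IH =>
      intro a ha
      rw [verts_insert] at ha
      have hlt := hT.lt
      rcases Finset.mem_insert.1 ha with rfl | ha
      · omega
      rcases Finset.mem_insert.1 ha with rfl | ha
      · omega
      · have := IH a ha; omega

lemma IncTree.card_verts {E : Finset (ℕ × ℕ)} {i j : ℕ} (h : IncTree E i j) :
    (verts E).card = E.card + 1 := by
  induction h with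
  | single i j hij =>
      have hv : verts {(i, j)} = {i, j} := by
        ext a
        simp only [mem_verts, Finset.mem_singleton, Prod.mk.injEq, Finset.mem_insert]
        constructor
        · rintro (⟨b, hb⟩ | ⟨b, hb⟩) <;> omega
        · rintro (rfl | rfl)
          · exact Or.inl ⟨j, rfl, rfl⟩
          · exact Or.inr ⟨i, rfl, rfl⟩
      rw [hv, Finset.card_insert_of_notMem (by simp; omega), Finset.card_singleton]
      simp
  | right E i j j' hT hjj' IH =>
      have hj' : j' ∉ verts E := fun hmem => by
        have := hT.verts_between j' hmem; omega
      have hij' : (i, j') ∉ E := fun hmem => hj' (snd_mem_verts hmem)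
      have hi : i ∈ verts E := fst_mem_verts hT.self_mem
      rw [verts_insert, Finset.card_insert_of_notMem hij',
        Finset.insert_eq_self.2 (Finset.mem_insert.2 (Or.inr hi)),
        Finset.card_insert_of_notMem hj', IH]
  | left E i j i' hT hii' IH =>
      have hi' : i' ∉ verts E := fun hmem => by
        have := hT.verts_between i' hmem; omega
      have hij' : (i', j) ∉ E := fun hmem => hi' (fst_mem_verts hmem)
      have hj : j ∈ verts E := snd_mem_verts hT.self_mem
      have : insert i' (insert j (verts E)) = insert i' (verts E) := by
        rw [Finset.insert_eq_self.2 hj]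
      rw [verts_insert, Finset.card_insert_of_notMem hij', this,
        Finset.card_insert_of_notMem hi', IH]

lemma IncTree.card_pos {E : Finset (ℕ × ℕ)} {i j : ℕ} (h : IncTree E i j) :
    1 ≤ E.card := Finset.card_pos.2 ⟨(i, j), h.self_mem⟩

/-! ### The extremal construction: edges of span at most k-1 -/

def nearG (n k : ℕ) : SimpleGraph (Fin n) where
  Adj x y := x ≠ y ∧ (x : ℕ) < (y : ℕ) + k ∧ (y : ℕ) < (x : ℕ) + k
  symm := ⟨by rintro x y ⟨h1, h2, h3⟩; exact ⟨h1.symm, h3, h2⟩⟩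
  loopless := ⟨by rintro x ⟨h1, -⟩; exact h1 rfl⟩

instance (n k : ℕ) : DecidableRel (nearG n k).Adj := fun x y => by
  change Decidable (x ≠ y ∧ _)
  infer_instance

lemma nearG_adj {n k : ℕ} {x y : Fin n} :
    (nearG n k).Adj x y ↔ x ≠ y ∧ (x : ℕ) < (y : ℕ) + k ∧ (y : ℕ) < (x : ℕ) + k :=
  Iff.rfl

lemma not_contains_nearG {E : Finset (ℕ × ℕ)} {i j k n : ℕ}
    (hT : IncTree E i j) (hk : E.card = k) (hkn : k + 1 ≤ n) :
    ¬ OContains (nearG n k) E := by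
  rintro ⟨f, hmono, hadj⟩
  have hiV : i ∈ verts E := fst_mem_verts hT.self_mem
  have hjV : j ∈ verts E := snd_mem_verts hT.self_mem
  have hij := hadj (i, j) hT.self_mem
  have hflt : f i < f j := hmono i hiV j hjV hT.lt
  have hinj : Set.InjOn f ↑(verts E) := by
    intro a ha b hb hfe
    by_contra hne
    rcases lt_or_gt_of_ne hne with h | h
    · exact absurd hfe (ne_of_lt (hmono a ha b hb h))
    · exact absurd hfe.symm (ne_of_lt (hmono b hb a ha h))
  have hcard : ((verts E).image f).card = k + 1 := by
    rw [Finset.card_image_of_injOn hinj, hT.card_verts, hk]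
  have hsub : (verts E).image f ⊆ Finset.Icc (f i) (f j) := by
    intro x hx
    rcases Finset.mem_image.1 hx with ⟨a, ha, rfl⟩
    have hb := hT.verts_between a ha
    rw [Finset.mem_Icc]
    constructor
    · rcases eq_or_lt_of_le hb.1 with rfl | h
      · exact le_rfl
      · exact le_of_lt (hmono i hiV a ha h)
    · rcases eq_or_lt_of_le hb.2 with rfl | h
      · exact le_rfl
      · exact le_of_lt (hmono a ha j hjV h)
  have hle := Finset.card_le_card hsub
  rw [hcard, Fin.card_Icc] at hle
  have hspan : (f j : ℕ) < (f i : ℕ) + k := hij.2.2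
  omega

lemma gauss_sum (n k : ℕ) (h : k ≤ n) :
    ∑ d ∈ Finset.Icc 1 (k - 1), (n - d) = (k - 1) * n - k.choose 2 := by
  induction k with
  | zero => simp
  | succ k IH =>
      rcases Nat.eq_zero_or_pos k with rfl | hk
      · simp
      · have IH' := IH (by omega)
        have hicc : Finset.Icc 1 (k + 1 - 1) = insert k (Finset.Icc 1 (k - 1)) := by
          ext d
          simp only [Finset.mem_Icc, Finset.mem_insert]
          omega
        rw [hicc, Finset.sum_insert (by simp only [Finset.mem_Icc]; omega), IH']
        have h2 : (k + 1).choose 2 = k + k.choose 2 := by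
          rw [Nat.choose_succ_succ k 1, Nat.choose_one_right]
        have h1 : k.choose 2 ≤ (k - 1) * n := by
          calc k.choose 2 = k * (k - 1) / 2 := Nat.choose_two_right k
            _ ≤ k * (k - 1) := Nat.div_le_self _ _
            _ = (k - 1) * k := Nat.mul_comm _ _
            _ ≤ (k - 1) * n := Nat.mul_le_mul_left _ (by omega)
        have h3 : k * n = (k - 1) * n + n := by
          have : (k - 1 + 1) * n = (k - 1) * n + n := by ring
          rwa [Nat.sub_add_cancel hk] at this
        have h4 : k + 1 - 1 = k := rfl
        rw [h4, h2, h3]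
        omega

lemma nearG_count (n k : ℕ) (hkn : k + 1 ≤ n) :
    (nearG n k).edgeSet.ncard = (k - 1) * n - k.choose 2 := by
  classical
  rw [← SimpleGraph.coe_edgeFinset, Set.ncard_coe_finset]
  set P : Finset (Fin n × Fin n) :=
    Finset.univ.filter (fun p => (nearG n k).Adj p.1 p.2 ∧ p.1 < p.2) with hP
  have hcardP : (nearG n k).edgeFinset.card = P.card := by
    symm
    apply Finset.card_bij (fun (p : Fin n × Fin n) (_ : p ∈ P) => s(p.1, p.2))
    · intro p hp
      rw [hP, Finset.mem_filter] at hp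
      rw [SimpleGraph.mem_edgeFinset, SimpleGraph.mem_edgeSet]
      exact hp.2.1
    · intro p hp q hq he
      rw [hP, Finset.mem_filter] at hp hq
      rcases Sym2.eq_iff.1 he with ⟨h1, h2⟩ | ⟨h1, h2⟩
      · exact Prod.ext h1 h2
      · exfalso
        have := hp.2.2
        have := hq.2.2
        omega
    · intro e he
      induction e with
      | _ a b =>
        rw [SimpleGraph.mem_edgeFinset, SimpleGraph.mem_edgeSet] at he
        have hne : a ≠ b := he.1
        rcases lt_or_gt_of_ne hne with h | h
        · exact ⟨(a, b), by rw [hP, Finset.mem_filter]; exact ⟨Finset.mem_univ _, he, h⟩, rfl⟩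
        · refine ⟨(b, a), ?_, Sym2.eq_swap⟩
          rw [hP, Finset.mem_filter]
          exact ⟨Finset.mem_univ _, (nearG n k).adj_symm he, h⟩
  rw [hcardP]
  have hbi : P = (Finset.Icc 1 (k - 1)).biUnion
      (fun d => Finset.univ.filter (fun p : Fin n × Fin n => (p.2 : ℕ) = (p.1 : ℕ) + d)) := by
    ext p
    rw [hP, Finset.mem_filter, Finset.mem_biUnion]
    simp only [Finset.mem_Icc, Finset.mem_filter, Finset.mem_univ, true_and, nearG_adj,
      Fin.lt_iff_val_lt_val]
    constructor
    · rintro ⟨⟨hne, h1, h2⟩, hlt⟩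
      exact ⟨(p.2 : ℕ) - (p.1 : ℕ), by omega, by omega⟩
    · rintro ⟨d, hd, he⟩
      refine ⟨⟨?_, by omega, by omega⟩, by omega⟩
      intro hc
      rw [hc] at he
      omega
  rw [hbi, Finset.card_biUnion]
  · have hcd : ∀ d ∈ Finset.Icc 1 (k - 1),
        (Finset.univ.filter (fun p : Fin n × Fin n => (p.2 : ℕ) = (p.1 : ℕ) + d)).card
          = n - d := by
      intro d hd
      rw [Finset.mem_Icc] at hd
      rw [← Finset.card_range (n - d)]
      apply Finset.card_bij (fun (p : Fin n × Fin n) (_ : p ∈ _) => (p.1 : ℕ))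
      · intro p hp
        rw [Finset.mem_filter] at hp
        have := p.2.isLt
        rw [Finset.mem_range]
        omega
      · intro p hp q hq he
        rw [Finset.mem_filter] at hp hq
        have h1 : p.1 = q.1 := Fin.ext he
        have h2 : p.2 = q.2 := Fin.ext (by rw [hp.2, hq.2, he])
        exact Prod.ext h1 h2
      · intro a ha
        rw [Finset.mem_range] at ha
        refine ⟨(⟨a, by omega⟩, ⟨a + d, by omega⟩), ?_, rfl⟩
        rw [Finset.mem_filter]
        exact ⟨Finset.mem_univ _, rfl⟩
    rw [Finset.sum_congr rfl hcd]
    exact gauss_sum n k (by omega)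
  · intro d hd e he hde
    rw [Function.onFun, Finset.disjoint_left]
    intro p hp hq
    rw [Finset.mem_filter] at hp hq
    exact hde (by omega)

/-! ### Upper bound -/

lemma embed_bound {n : ℕ} {E : Finset (ℕ × ℕ)} {i j : ℕ} (hT : IncTree E i j)
    (f : ℕ → Fin n) (hmono : ∀ a ∈ verts E, ∀ b ∈ verts E, a < b → f a < f b) :
    (f i : ℕ) + (E.card + 1) ≤ n ∧ E.card ≤ (f j : ℕ) := by
  have hiV : i ∈ verts E := fst_mem_verts hT.self_mem
  have hjV : j ∈ verts E := snd_mem_verts hT.self_mem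
  have hinj : Set.InjOn f ↑(verts E) := by
    intro a ha b hb hfe
    by_contra hne
    rcases lt_or_gt_of_ne hne with h | h
    · exact absurd hfe (ne_of_lt (hmono a ha b hb h))
    · exact absurd hfe.symm (ne_of_lt (hmono b hb a ha h))
  have hcard : ((verts E).image f).card = E.card + 1 := by
    rw [Finset.card_image_of_injOn hinj, hT.card_verts]
  have hsub : (verts E).image f ⊆ Finset.Icc (f i) (f j) := by
    intro x hx
    rcases Finset.mem_image.1 hx with ⟨a, ha, rfl⟩
    have hb := hT.verts_between a ha
    rw [Finset.mem_Icc]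
    constructor
    · rcases eq_or_lt_of_le hb.1 with rfl | h
      · exact le_rfl
      · exact le_of_lt (hmono i hiV a ha h)
    · rcases eq_or_lt_of_le hb.2 with rfl | h
      · exact le_rfl
      · exact le_of_lt (hmono a ha j hjV h)
  have hle := Finset.card_le_card hsub
  rw [hcard, Fin.card_Icc] at hle
  have h1 := (f j).isLt
  omega

lemma choose_two_le {c n : ℕ} (hcn : c ≤ n) : c.choose 2 ≤ (c - 1) * n := by
  calc c.choose 2 = c * (c - 1) / 2 := Nat.choose_two_right c
    _ ≤ c * (c - 1) := Nat.div_le_self _ _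
    _ = (c - 1) * c := Nat.mul_comm _ _
    _ ≤ (c - 1) * n := Nat.mul_le_mul_left _ hcn

lemma final_arith (eG eG' eD A ch c n : ℕ)
    (h1 : eG ≤ eG' + eD) (h2 : eD ≤ n - c) (h3 : eG' ≤ A - ch) (h4 : ch ≤ A)
    (h5 : c + 2 ≤ n) : eG ≤ (A + n) - (ch + c) := by omega

lemma ub {E : Finset (ℕ × ℕ)} {i j : ℕ} (hT : IncTree E i j) :
    ∀ n : ℕ, E.card + 1 ≤ n → ∀ G : SimpleGraph (Fin n), ¬ OContains G E →
      G.edgeSet.ncard ≤ (E.card - 1) * n - E.card.choose 2 := by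
  induction hT with
  | single p q hpq =>
      intro n hn G hG
      have hempty : G.edgeSet = ∅ := by
        by_contra hne
        obtain ⟨e, he⟩ := Set.nonempty_iff_ne_empty.2 hne
        have hex : ∃ a b : Fin n, G.Adj a b ∧ a < b := by
          induction e with
          | _ a b =>
            rw [SimpleGraph.mem_edgeSet] at he
            rcases lt_or_gt_of_ne he.ne with h | h
            · exact ⟨a, b, he, h⟩
            · exact ⟨b, a, he.symm, h⟩
        obtain ⟨a, b, hadj, hab⟩ := hex
        have hvs : verts {(p, q)} = {p, q} := by
          show verts (insert (p, q) ∅) = _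
          rw [verts_insert]
          simp [verts]
        apply hG
        refine ⟨fun x => if x = p then a else b, ?_, ?_⟩
        · intro x hx y hy hxy
          rw [hvs] at hx hy
          simp only [Finset.mem_insert, Finset.mem_singleton] at hx hy
          rcases hx with rfl | rfl <;> rcases hy with rfl | rfl
          · omega
          · show (if x = x then a else b) < if y = x then a else b
            rw [if_pos rfl, if_neg (by omega)]
            exact hab
          · omega
          · omega
        · intro r hr
          rw [Finset.mem_singleton] at hr
          subst hr
          show G.Adj (if p = p then a else b) (if q = p then a else b)
          rw [if_pos rfl, if_neg (by omega)]
          exact hadj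
      rw [hempty]
      simp
  | right E i j j' hT hjj' IH =>
      intro n hn G hG
      classical
      have hj'new : ∀ a ∈ verts E, a < j' :=
        fun a ha => lt_of_le_of_lt (hT.verts_between a ha).2 hjj'
      have hins : (i, j') ∉ E := fun hm => lt_irrefl j' (hj'new j' (snd_mem_verts hm))
      rw [Finset.card_insert_of_notMem hins] at hn ⊢
      set c := E.card with hc
      set S : Set (Sym2 (Fin n)) := {e | ∃ x y : Fin n, e = s(x, y) ∧ G.Adj x y ∧
        (∀ z, G.Adj x z → z ≤ y) ∧ (x : ℕ) + (c + 1) ≤ n} with hS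
      set G' := G.deleteEdges S with hG'def
      have hG'le : ∀ {x y : Fin n}, G'.Adj x y → G.Adj x y :=
        fun h => (SimpleGraph.deleteEdges_adj.1 h).1
      have hiV : i ∈ verts E := fst_mem_verts hT.self_mem
      have hjV : j ∈ verts E := snd_mem_verts hT.self_mem
      have hnc : ¬ OContains G' E := by
        rintro ⟨f, hmono, hadj⟩
        have hbound := embed_bound hT f hmono
        have hAdjG : G.Adj (f i) (f j) := hG'le (hadj (i, j) hT.self_mem)
        set N := Finset.univ.filter (fun z => G.Adj (f i) z) with hN
        have hNne : N.Nonempty :=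
          ⟨f j, Finset.mem_filter.2 ⟨Finset.mem_univ _, hAdjG⟩⟩
        set m := N.max' hNne with hm
        have hm_adj : G.Adj (f i) m := (Finset.mem_filter.1 (N.max'_mem hNne)).2
        have hm_max : ∀ z, G.Adj (f i) z → z ≤ m := fun z hz =>
          N.le_max' z (Finset.mem_filter.2 ⟨Finset.mem_univ _, hz⟩)
        have hmemS : s(f i, m) ∈ S := ⟨f i, m, rfl, hm_adj, hm_max, hbound.1⟩
        have hne : f j ≠ m := by
          intro he
          exact (SimpleGraph.deleteEdges_adj.1 (hadj (i, j) hT.self_mem)).2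
            (by rw [he]; exact hmemS)
        have hfjm : f j < m := lt_of_le_of_ne (hm_max _ hAdjG) hne
        set F : ℕ → Fin n := fun x => if x = j' then m else f x with hF
        have hFE : ∀ a ∈ verts E, F a = f a := fun a ha => if_neg (ne_of_lt (hj'new a ha))
        have hFj' : F j' = m := if_pos rfl
        apply hG
        refine ⟨F, ?_, ?_⟩
        · intro a ha b hb hab
          rw [verts_insert] at ha hb
          have ha' : a ∈ verts E ∨ a = j' := by
            rcases Finset.mem_insert.1 ha with rfl | ha
            · exact Or.inl hiV
            rcases Finset.mem_insert.1 ha with rfl | ha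
            · exact Or.inr rfl
            · exact Or.inl ha
          have hb' : b ∈ verts E ∨ b = j' := by
            rcases Finset.mem_insert.1 hb with rfl | hb
            · exact Or.inl hiV
            rcases Finset.mem_insert.1 hb with rfl | hb
            · exact Or.inr rfl
            · exact Or.inl hb
          rcases ha' with haE | rfl
          · rcases hb' with hbE | rfl
            · rw [hFE a haE, hFE b hbE]
              exact hmono a haE b hbE hab
            · rw [hFE a haE, hFj']
              have hfa : f a ≤ f j := by
                rcases eq_or_lt_of_le (hT.verts_between a haE).2 with rfl | h
                · exact le_rfl
                · exact le_of_lt (hmono a haE j hjV h)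
              exact lt_of_le_of_lt hfa hfjm
          · exfalso
            rcases hb' with hbE | rfl
            · exact absurd (hj'new b hbE) (by omega)
            · exact lt_irrefl _ hab
        · intro p hp
          rcases Finset.mem_insert.1 hp with rfl | hp
          · show G.Adj (F i) (F j')
            rw [hFE i hiV, hFj']
            exact hm_adj
          · rw [hFE p.1 (fst_mem_verts hp), hFE p.2 (snd_mem_verts hp)]
            exact hG'le (hadj p hp)
      have hIH := IH n (by omega) G' hnc
      have hdel : (G.edgeSet ∩ S).ncard ≤ n - c := by
        have h2 := Set.ncard_le_ncard_of_injOn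
          (fun e : Sym2 (Fin n) => if h : ∃ x y : Fin n, e = s(x, y) ∧ G.Adj x y ∧
              (∀ z, G.Adj x z → z ≤ y) ∧ (x : ℕ) + (c + 1) ≤ n
            then (h.choose : ℕ) else 0)
          (s := G.edgeSet ∩ S) (t := ↑(Finset.range (n - c))) ?_ ?_
          (Finset.range (n - c)).finite_toSet
        · rwa [Set.ncard_coe_finset, Finset.card_range] at h2
        · intro e he
          have h : ∃ x y : Fin n, e = s(x, y) ∧ G.Adj x y ∧
              (∀ z, G.Adj x z → z ≤ y) ∧ (x : ℕ) + (c + 1) ≤ n := he.2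
          simp only [dif_pos h, Finset.coe_range, Set.mem_Iio]
          obtain ⟨y, -, -, -, hb⟩ := h.choose_spec
          omega
        · intro e1 he1 e2 he2 heq
          have h1 : ∃ x y : Fin n, e1 = s(x, y) ∧ G.Adj x y ∧
              (∀ z, G.Adj x z → z ≤ y) ∧ (x : ℕ) + (c + 1) ≤ n := he1.2
          have h2 : ∃ x y : Fin n, e2 = s(x, y) ∧ G.Adj x y ∧
              (∀ z, G.Adj x z → z ≤ y) ∧ (x : ℕ) + (c + 1) ≤ n := he2.2
          simp only [dif_pos h1, dif_pos h2] at heq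
          obtain ⟨y1, he1', hadj1, hmax1, -⟩ := h1.choose_spec
          obtain ⟨y2, he2', hadj2, hmax2, -⟩ := h2.choose_spec
          have hx : h1.choose = h2.choose := Fin.ext heq
          rw [hx] at he1' hadj1 hmax1
          have hy : y1 = y2 := le_antisymm (hmax2 y1 hadj1) (hmax1 y2 hadj2)
          rw [hy] at he1'
          exact he1'.trans he2'.symm
      have hsplit : G.edgeSet.ncard ≤ G'.edgeSet.ncard + (G.edgeSet ∩ S).ncard := by
        have hU : G.edgeSet = G'.edgeSet ∪ (G.edgeSet ∩ S) := by
          rw [hG'def, SimpleGraph.edgeSet_deleteEdges]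
          ext e
          simp only [Set.mem_union, Set.mem_diff, Set.mem_inter_iff]
          tauto
        calc G.edgeSet.ncard = (G'.edgeSet ∪ (G.edgeSet ∩ S)).ncard := by rw [← hU]
          _ ≤ _ := Set.ncard_union_le _ _
      have hch : (c + 1).choose 2 = c.choose 2 + c := by
        have h : (c + 1).choose 2 = c.choose 1 + c.choose 2 := Nat.choose_succ_succ c 1
        rw [Nat.choose_one_right] at h
        omega
      have h1c : 1 ≤ c := hT.card_pos
      have hc2 : c.choose 2 ≤ (c - 1) * n := choose_two_le (by omega)
      have hmul : c * n = (c - 1) * n + n := by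
        have h' : (c - 1 + 1) * n = (c - 1) * n + n := by ring
        rwa [Nat.sub_add_cancel h1c] at h'
      simp only [Nat.add_sub_cancel]
      rw [hmul, hch]
      exact final_arith _ _ _ _ _ _ _ hsplit hdel hIH hc2 hn
  | left E i j i' hT hii' IH =>
      intro n hn G hG
      classical
      have hi'new : ∀ a ∈ verts E, i' < a :=
        fun a ha => lt_of_lt_of_le hii' (hT.verts_between a ha).1
      have hins : (i', j) ∉ E := fun hm => lt_irrefl i' (hi'new i' (fst_mem_verts hm))
      rw [Finset.card_insert_of_notMem hins] at hn ⊢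
      set c := E.card with hc
      set S : Set (Sym2 (Fin n)) := {e | ∃ x y : Fin n, e = s(x, y) ∧ G.Adj x y ∧
        (∀ z, G.Adj x z → y ≤ z) ∧ c ≤ (x : ℕ)} with hS
      set G' := G.deleteEdges S with hG'def
      have hG'le : ∀ {x y : Fin n}, G'.Adj x y → G.Adj x y :=
        fun h => (SimpleGraph.deleteEdges_adj.1 h).1
      have hiV : i ∈ verts E := fst_mem_verts hT.self_mem
      have hjV : j ∈ verts E := snd_mem_verts hT.self_mem
      have hnc : ¬ OContains G' E := by
        rintro ⟨f, hmono, hadj⟩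
        have hbound := embed_bound hT f hmono
        have hAdjG : G.Adj (f i) (f j) := hG'le (hadj (i, j) hT.self_mem)
        set N := Finset.univ.filter (fun z => G.Adj (f j) z) with hN
        have hNne : N.Nonempty :=
          ⟨f i, Finset.mem_filter.2 ⟨Finset.mem_univ _, hAdjG.symm⟩⟩
        set m := N.min' hNne with hm
        have hm_adj : G.Adj (f j) m := (Finset.mem_filter.1 (N.min'_mem hNne)).2
        have hm_min : ∀ z, G.Adj (f j) z → m ≤ z := fun z hz =>
          N.min'_le z (Finset.mem_filter.2 ⟨Finset.mem_univ _, hz⟩)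
        have hmemS : s(f j, m) ∈ S := ⟨f j, m, rfl, hm_adj, hm_min, hbound.2⟩
        have hne : m ≠ f i := by
          intro he
          apply (SimpleGraph.deleteEdges_adj.1 (hadj (i, j) hT.self_mem)).2
          have : s(f i, f j) = s(f j, m) := by rw [he]; exact Sym2.eq_swap
          rw [this]
          exact hmemS
        have hfim : m < f i := lt_of_le_of_ne (hm_min _ hAdjG.symm) hne
        set F : ℕ → Fin n := fun x => if x = i' then m else f x with hF
        have hFE : ∀ a ∈ verts E, F a = f a := fun a ha =>
          if_neg (by have := hi'new a ha; omega)
        have hFi' : F i' = m := if_pos rfl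
        apply hG
        refine ⟨F, ?_, ?_⟩
        · intro a ha b hb hab
          rw [verts_insert] at ha hb
          have ha' : a ∈ verts E ∨ a = i' := by
            rcases Finset.mem_insert.1 ha with rfl | ha
            · exact Or.inr rfl
            rcases Finset.mem_insert.1 ha with rfl | ha
            · exact Or.inl hjV
            · exact Or.inl ha
          have hb' : b ∈ verts E ∨ b = i' := by
            rcases Finset.mem_insert.1 hb with rfl | hb
            · exact Or.inr rfl
            rcases Finset.mem_insert.1 hb with rfl | hb
            · exact Or.inl hjV
            · exact Or.inl hb
          rcases hb' with hbE | rfl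
          · rcases ha' with haE | rfl
            · rw [hFE a haE, hFE b hbE]
              exact hmono a haE b hbE hab
            · rw [hFi', hFE b hbE]
              have hfb : f i ≤ f b := by
                rcases eq_or_lt_of_le (hT.verts_between b hbE).1 with rfl | h
                · exact le_rfl
                · exact le_of_lt (hmono i hiV b hbE h)
              exact lt_of_lt_of_le hfim hfb
          · exfalso
            rcases ha' with haE | rfl
            · exact absurd (hi'new a haE) (by omega)
            · exact lt_irrefl _ hab
        · intro p hp
          rcases Finset.mem_insert.1 hp with rfl | hp
          · show G.Adj (F i') (F j)
            rw [hFE j hjV, hFi']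
            exact hm_adj.symm
          · rw [hFE p.1 (fst_mem_verts hp), hFE p.2 (snd_mem_verts hp)]
            exact hG'le (hadj p hp)
      have hIH := IH n (by omega) G' hnc
      have hdel : (G.edgeSet ∩ S).ncard ≤ n - c := by
        have h2 := Set.ncard_le_ncard_of_injOn
          (fun e : Sym2 (Fin n) => if h : ∃ x y : Fin n, e = s(x, y) ∧ G.Adj x y ∧
              (∀ z, G.Adj x z → y ≤ z) ∧ c ≤ (x : ℕ)
            then (h.choose : ℕ) else 0)
          (s := G.edgeSet ∩ S) (t := ↑(Finset.Ico c n)) ?_ ?_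
          (Finset.Ico c n).finite_toSet
        · rwa [Set.ncard_coe_finset, Nat.card_Ico] at h2
        · intro e he
          have h : ∃ x y : Fin n, e = s(x, y) ∧ G.Adj x y ∧
              (∀ z, G.Adj x z → y ≤ z) ∧ c ≤ (x : ℕ) := he.2
          simp only [dif_pos h, Finset.coe_Ico, Set.mem_Ico]
          obtain ⟨y, -, -, -, hb⟩ := h.choose_spec
          exact ⟨hb, h.choose.isLt⟩
        · intro e1 he1 e2 he2 heq
          have h1 : ∃ x y : Fin n, e1 = s(x, y) ∧ G.Adj x y ∧
              (∀ z, G.Adj x z → y ≤ z) ∧ c ≤ (x : ℕ) := he1.2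
          have h2 : ∃ x y : Fin n, e2 = s(x, y) ∧ G.Adj x y ∧
              (∀ z, G.Adj x z → y ≤ z) ∧ c ≤ (x : ℕ) := he2.2
          simp only [dif_pos h1, dif_pos h2] at heq
          obtain ⟨y1, he1', hadj1, hmin1, -⟩ := h1.choose_spec
          obtain ⟨y2, he2', hadj2, hmin2, -⟩ := h2.choose_spec
          have hx : h1.choose = h2.choose := Fin.ext heq
          rw [hx] at he1' hadj1 hmin1
          have hy : y1 = y2 := le_antisymm (hmin1 y2 hadj2) (hmin2 y1 hadj1)
          rw [hy] at he1'
          exact he1'.trans he2'.symm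
      have hsplit : G.edgeSet.ncard ≤ G'.edgeSet.ncard + (G.edgeSet ∩ S).ncard := by
        have hU : G.edgeSet = G'.edgeSet ∪ (G.edgeSet ∩ S) := by
          rw [hG'def, SimpleGraph.edgeSet_deleteEdges]
          ext e
          simp only [Set.mem_union, Set.mem_diff, Set.mem_inter_iff]
          tauto
        calc G.edgeSet.ncard = (G'.edgeSet ∪ (G.edgeSet ∩ S)).ncard := by rw [← hU]
          _ ≤ _ := Set.ncard_union_le _ _
      have hch : (c + 1).choose 2 = c.choose 2 + c := by
        have h : (c + 1).choose 2 = c.choose 1 + c.choose 2 := Nat.choose_succ_succ c 1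
        rw [Nat.choose_one_right] at h
        omega
      have h1c : 1 ≤ c := hT.card_pos
      have hc2 : c.choose 2 ≤ (c - 1) * n := choose_two_le (by omega)
      have hmul : c * n = (c - 1) * n + n := by
        have h' : (c - 1 + 1) * n = (c - 1) * n + n := by ring
        rwa [Nat.sub_add_cancel h1c] at h'
      simp only [Nat.add_sub_cancel]
      rw [hmul, hch]
      exact final_arith _ _ _ _ _ _ _ hsplit hdel hIH hc2 hn

/-- For an increasing tree T with k edges and n ≥ k+1,
ex→(n,T) = (k-1)n - C(k,2). -/
theorem stmt_6 (k n : ℕ) (E : Finset (ℕ × ℕ)) (i j : ℕ)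
    (hT : IncTree E i j) (hk : E.card = k) (hn : k + 1 ≤ n) :
    (∀ G : SimpleGraph (Fin n), ¬ OContains G E →
        G.edgeSet.ncard ≤ (k - 1) * n - k.choose 2) ∧
    (∃ G : SimpleGraph (Fin n), ¬ OContains G E ∧
        G.edgeSet.ncard = (k - 1) * n - k.choose 2) := by
  constructor
  · intro G hG
    have := ub hT n (by omega) G hG
    rwa [hk] at this
  · exact ⟨nearG n k, not_contains_nearG hT hk hn, nearG_count n k hn⟩
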